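/- Let e ≥ 1, 1 ≤ a ≤ e, r ≥ 1, and let λ be a partition with λ_{r−1} ≥ λ_r + a if r > 1 and with λ_i = λ_r for all r < i ≤ r + e − a. Let μ be the partition obtained from λ by adding a straight e-hook with arm length a − 1 at row r, i.e. μ_r = λ_r + a, μ_i = λ_i + 1 for r < i ≤ r + e − a, and μ_i = λ_i otherwise. Then d_μ − d_λ = (r − a)·e + e(e−1)/2 + a(a−1)/2 (an identity of integers). -/

import Mathlib

/-- `f` encodes a partition `λ` via its parts `λ_i = f i` for `i ≥ 1` (and `f 0 = 0`):
the parts are weakly decreasing and eventually zero. -/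
def IsPartition (f : ℕ → ℕ) : Prop :=
  f 0 = 0 ∧ (∀ i, 1 ≤ i → f (i + 1) ≤ f i) ∧ ∃ N, ∀ i, N ≤ i → f i = 0

/-- The conjugate partition: `conjP f j = #{i ≥ 1 | f i ≥ j}`. -/
noncomputable def conjP (f : ℕ → ℕ) (j : ℕ) : ℕ :=
  Set.ncard {i : ℕ | 1 ≤ i ∧ j ≤ f i}

/-- The size `|λ| = Σ_i λ_i` of the partition. -/
noncomputable def wtP (f : ℕ → ℕ) : ℕ := ∑ᶠ i, f i

/-- `d_λ = Σ_i (λ'_i)² − Σ_i i·λ_i`. -/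
noncomputable def dP (f : ℕ → ℕ) : ℤ :=
  (∑ᶠ i : ℕ, (conjP f i : ℤ) ^ 2) - ∑ᶠ i : ℕ, (i : ℤ) * (f i : ℤ)

/-- The multiset of hook lengths of the partition: for each cell `(i,j)` of the Young
diagram (`1 ≤ i`, `1 ≤ j ≤ λ_i`) the hook length `λ_i − j + λ'_j − i + 1`. -/
noncomputable def hooksP (f : ℕ → ℕ) : Multiset ℤ :=
  (((Finset.Icc 1 (conjP f 1)) ×ˢ (Finset.Icc 1 (f 1))).filter
      (fun p => p.2 ≤ f p.1)).val.map
    (fun p => (f p.1 : ℤ) - (p.2 : ℤ) + (conjP f p.2 : ℤ) - (p.1 : ℤ) + 1)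

open Finset

/-- conjP as a finite card, given a bound past which the partition vanishes. -/
lemma conjP_eq_card_aux (h : ℕ → ℕ) (N j : ℕ) (hj : 1 ≤ j) (hN : ∀ i, N ≤ i → h i = 0) :
    conjP h j = ((Finset.Icc 1 N).filter (fun i => j ≤ h i)).card := by
  rw [conjP]
  have hset : {i : ℕ | 1 ≤ i ∧ j ≤ h i}
      = ↑((Finset.Icc 1 N).filter (fun i => j ≤ h i)) := by
    ext i
    simp only [Finset.coe_filter, Finset.mem_Icc, Set.mem_setOf_eq]
    constructor
    · rintro ⟨h1, h2⟩
      refine ⟨⟨h1, ?_⟩, h2⟩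
      by_contra hc
      push_neg at hc
      have := hN i hc.le
      omega
    · rintro ⟨⟨h1, _⟩, h2⟩
      exact ⟨h1, h2⟩
  rw [hset, Set.ncard_coe_finset]

lemma conjP_zero_aux (h : ℕ → ℕ) : conjP h 0 = 0 := by
  have hset : {i : ℕ | 1 ≤ i ∧ 0 ≤ h i} = Set.Ici 1 := by
    ext i; simp
  rw [conjP, hset]
  exact Set.Infinite.ncard (Set.Ici_infinite 1)

lemma conjP_eq_zero_aux (h : ℕ → ℕ) (j : ℕ) (hbig : ∀ i, 1 ≤ i → h i < j) :
    conjP h j = 0 := by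
  have hset : {i : ℕ | 1 ≤ i ∧ j ≤ h i} = ∅ := by
    ext i
    simp only [Set.mem_setOf_eq, Set.mem_empty_iff_false, iff_false]
    rintro ⟨h1, h2⟩
    exact absurd h2 (not_le.2 (hbig i h1))
  rw [conjP, hset, Set.ncard_empty]

/-- Adding a straight `e`-hook with arm length `a − 1` at row `r`
changes `d_λ` by `(r − a)·e + e(e−1)/2 + a(a−1)/2`. -/
theorem dP_add_straight_hook
    (e a r : ℕ) (he : 1 ≤ e) (ha1 : 1 ≤ a) (hae : a ≤ e) (hr : 1 ≤ r)
    (f : ℕ → ℕ) (hf : IsPartition f)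
    (hcorner : 1 < r → f r + a ≤ f (r - 1))
    (hflat : ∀ i, r < i → i ≤ r + e - a → f i = f r)
    (g : ℕ → ℕ)
    (hg : ∀ i, g i = if i = r then f r + a
      else if r < i ∧ i ≤ r + e - a then f i + 1 else f i) :
    dP g - dP f =
      ((r : ℤ) - (a : ℤ)) * (e : ℤ) + (e : ℤ) * ((e : ℤ) - 1) / 2 +
        (a : ℤ) * ((a : ℤ) - 1) / 2 := by
  obtain ⟨hf0, hdec, N0, hN0⟩ := hf
  set c := f r with hc
  set m := e - a with hmdef
  have hm : a + m = e := by omega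
  have hrem : r + e - a = r + m := by omega
  -- antitonicity of f on [1, ∞)
  have hanti : ∀ i j, 1 ≤ i → i ≤ j → f j ≤ f i := by
    intro i j h1 hij
    induction j, hij using Nat.le_induction with
    | base => exact le_refl _
    | succ n hn ih => exact le_trans (hdec n (le_trans h1 hn)) ih
  -- values of g
  have hgr : g r = c + a := by rw [hg]; simp
  have hgmid : ∀ i, r < i → i ≤ r + m → g i = c + 1 := by
    intro i h1 h2
    rw [hg]
    rw [if_neg (by omega), if_pos ⟨h1, by omega⟩, hflat i h1 (by omega)]
  have hgout : ∀ i, i < r ∨ r + m < i → g i = f i := by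
    intro i hi
    rw [hg, if_neg (by omega), if_neg (by omega)]
  -- bounds
  have hfc : ∀ i, r ≤ i → f i ≤ c := fun i hi => hanti r i hr hi
  have hfge : ∀ i, 1 ≤ i → i ≤ r - 1 → c + a ≤ f i := by
    intro i h1 h2
    have hr2 : 1 < r := by omega
    exact le_trans (hcorner hr2) (hanti i (r - 1) h1 h2)
  set N := max N0 (r + m + 1) with hNdef
  have hNf : ∀ i, N ≤ i → f i = 0 := fun i hi => hN0 i (le_trans (le_max_left _ _) hi)
  have hNg : ∀ i, N ≤ i → g i = 0 := by
    intro i hi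
    rw [hgout i (Or.inr (by omega))]
    exact hNf i hi
  have hNr : r + m + 1 ≤ N := le_max_right _ _
  -- conjugate values
  have hcf : ∀ j, c + 1 ≤ j → j ≤ c + a → conjP f j = r - 1 := by
    intro j h1 h2
    rw [conjP_eq_card_aux f N j (by omega) hNf]
    have : (Finset.Icc 1 N).filter (fun i => j ≤ f i) = Finset.Icc 1 (r - 1) := by
      ext i
      simp only [Finset.mem_filter, Finset.mem_Icc]
      constructor
      · rintro ⟨⟨hi1, _⟩, hij⟩
        refine ⟨hi1, ?_⟩
        by_contra hcon
        have : r ≤ i := by omega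
        have := hfc i this
        omega
      · rintro ⟨hi1, hi2⟩
        exact ⟨⟨hi1, by omega⟩, le_trans h2 (hfge i hi1 hi2)⟩
    rw [this, Nat.card_Icc]
    omega
  have hcg1 : conjP g (c + 1) = r + m := by
    rw [conjP_eq_card_aux g N (c + 1) (by omega) hNg]
    have : (Finset.Icc 1 N).filter (fun i => c + 1 ≤ g i) = Finset.Icc 1 (r + m) := by
      ext i
      simp only [Finset.mem_filter, Finset.mem_Icc]
      constructor
      · rintro ⟨⟨hi1, _⟩, hij⟩
        refine ⟨hi1, ?_⟩
        by_contra hcon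
        have hout : g i = f i := hgout i (Or.inr (by omega))
        have : f i ≤ c := hfc i (by omega)
        omega
      · rintro ⟨hi1, hi2⟩
        refine ⟨⟨hi1, by omega⟩, ?_⟩
        rcases lt_trichotomy i r with h | h | h
        · rw [hgout i (Or.inl h)]
          have := hfge i hi1 (by omega)
          omega
        · rw [h, hgr]; omega
        · rw [hgmid i h hi2]
    rw [this, Nat.card_Icc]
    omega
  have hcg2 : ∀ j, c + 2 ≤ j → j ≤ c + a → conjP g j = r := by
    intro j h1 h2
    rw [conjP_eq_card_aux g N j (by omega) hNg]
    have : (Finset.Icc 1 N).filter (fun i => j ≤ g i) = Finset.Icc 1 r := by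
      ext i
      simp only [Finset.mem_filter, Finset.mem_Icc]
      constructor
      · rintro ⟨⟨hi1, _⟩, hij⟩
        refine ⟨hi1, ?_⟩
        by_contra hcon
        have hir : r < i := by omega
        rcases le_or_gt i (r + m) with hle | hlt
        · rw [hgmid i hir hle] at hij; omega
        · rw [hgout i (Or.inr hlt)] at hij
          have := hfc i (by omega)
          omega
      · rintro ⟨hi1, hi2⟩
        refine ⟨⟨hi1, by omega⟩, ?_⟩
        rcases eq_or_lt_of_le hi2 with h | h
        · rw [h, hgr]; omega
        · rw [hgout i (Or.inl h)]
          have := hfge i hi1 (by omega)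
          omega
    rw [this, Nat.card_Icc]
    omega
  have hcgf : ∀ j, 1 ≤ j → j ≤ c ∨ c + a < j → conjP g j = conjP f j := by
    intro j hj1 hj2
    rw [conjP_eq_card_aux g N j hj1 hNg, conjP_eq_card_aux f N j hj1 hNf]
    congr 1
    apply Finset.filter_congr
    intro i _
    have key : j ≤ g i ↔ j ≤ f i := by
      rcases lt_trichotomy i r with h | h | h
      · rw [hgout i (Or.inl h)]
      · subst h
        rw [hgr]
        rcases hj2 with h' | h' <;> omega
      · rcases le_or_gt i (r + m) with hle | hlt
        · rw [hgmid i h hle, hflat i h (by omega)]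
          rcases hj2 with h' | h' <;> omega
        · rw [hgout i (Or.inr hlt)]
    simp [key]
  -- finsum reductions
  set M := f 1 + a with hMdef
  have hfM : ∀ i, 1 ≤ i → f i ≤ M := by
    intro i hi
    have := hanti 1 i le_rfl hi
    omega
  have hgM : ∀ i, 1 ≤ i → g i ≤ M := by
    intro i hi
    rcases lt_trichotomy i r with h | h | h
    · rw [hgout i (Or.inl h)]; have := hfM i hi; omega
    · rw [h, hgr]
      have := hanti 1 r le_rfl hr
      omega
    · rcases le_or_gt i (r + m) with hle | hlt
      · rw [hgmid i h hle]
        have := hanti 1 r le_rfl hr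
        omega
      · rw [hgout i (Or.inr hlt)]; have := hfM i hi; omega
  have hsupC : ∀ (h : ℕ → ℕ), (∀ i, 1 ≤ i → h i ≤ M) →
      ∑ᶠ j : ℕ, (conjP h j : ℤ) ^ 2 = ∑ j ∈ Finset.Icc 1 M, (conjP h j : ℤ) ^ 2 := by
    intro h hbd
    apply finsum_eq_sum_of_support_subset
    intro j hj
    simp only [Function.mem_support, ne_eq] at hj
    simp only [Finset.coe_Icc, Set.mem_Icc]
    by_contra hcon
    push_neg at hcon
    rcases Nat.eq_zero_or_pos j with h0 | h0
    · rw [h0, conjP_zero_aux] at hj; simp at hj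
    · have hMj : M < j := hcon h0
      rw [conjP_eq_zero_aux h j (fun i hi => lt_of_le_of_lt (hbd i hi) hMj)] at hj
      simp at hj
  have hsupW : ∀ (h : ℕ → ℕ), (∀ i, N ≤ i → h i = 0) →
      ∑ᶠ i : ℕ, (i : ℤ) * (h i : ℤ) = ∑ i ∈ Finset.Icc 1 N, (i : ℤ) * (h i : ℤ) := by
    intro h hbd
    apply finsum_eq_sum_of_support_subset
    intro i hi
    simp only [Function.mem_support, ne_eq] at hi
    simp only [Finset.coe_Icc, Set.mem_Icc]
    constructor
    · by_contra hcon
      push_neg at hcon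
      interval_cases i
      · simp at hi
    · by_contra hcon
      push_neg at hcon
      rw [hbd i hcon.le] at hi
      simp at hi
  -- the conjugate-sum difference
  have hCdiff : (∑ᶠ j : ℕ, (conjP g j : ℤ) ^ 2) - (∑ᶠ j : ℕ, (conjP f j : ℤ) ^ 2)
      = ∑ j ∈ Finset.Icc (c + 1) (c + a), ((conjP g j : ℤ) ^ 2 - (conjP f j : ℤ) ^ 2) := by
    rw [hsupC g hgM, hsupC f hfM, ← Finset.sum_sub_distrib]
    refine (Finset.sum_subset ?_ ?_).symm
    · intro j hj
      simp only [Finset.mem_Icc] at hj ⊢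
      have hcM : c + a ≤ M := by
        have := hanti 1 r le_rfl hr
        omega
      omega
    · intro j hj hj'
      simp only [Finset.mem_Icc] at hj hj'
      rw [hcgf j (by omega) (by omega)]
      ring
  -- weight-sum difference
  have hWdiff : (∑ᶠ i : ℕ, (i : ℤ) * (g i : ℤ)) - (∑ᶠ i : ℕ, (i : ℤ) * (f i : ℤ))
      = ∑ i ∈ Finset.Icc r (r + m), ((i : ℤ) * (g i : ℤ) - (i : ℤ) * (f i : ℤ)) := by
    rw [hsupW g hNg, hsupW f hNf, ← Finset.sum_sub_distrib]
    refine (Finset.sum_subset ?_ ?_).symm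
    · intro i hi
      simp only [Finset.mem_Icc] at hi ⊢
      omega
    · intro i hi hi'
      simp only [Finset.mem_Icc] at hi hi'
      rw [hgout i (by omega)]
      ring
  -- compute the conjugate-sum difference explicitly
  have hsplitC : Finset.Icc (c + 1) (c + a)
      = insert (c + 1) (Finset.Icc (c + 2) (c + a)) := by
    ext j
    simp only [Finset.mem_insert, Finset.mem_Icc]
    omega
  have hCval : ∑ j ∈ Finset.Icc (c + 1) (c + a), ((conjP g j : ℤ) ^ 2 - (conjP f j : ℤ) ^ 2)
      = (((r : ℤ) + m) ^ 2 - ((r : ℤ) - 1) ^ 2)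
        + ((a : ℤ) - 1) * ((r : ℤ) ^ 2 - ((r : ℤ) - 1) ^ 2) := by
    rw [hsplitC, Finset.sum_insert (by simp)]
    have h1 : ((conjP g (c + 1) : ℤ) ^ 2 - (conjP f (c + 1) : ℤ) ^ 2)
        = ((r : ℤ) + m) ^ 2 - ((r : ℤ) - 1) ^ 2 := by
      rw [hcg1, hcf (c + 1) le_rfl (by omega)]
      have : ((r - 1 : ℕ) : ℤ) = (r : ℤ) - 1 := by omega
      push_cast [this]
      ring
    have h2 : ∑ j ∈ Finset.Icc (c + 2) (c + a), ((conjP g j : ℤ) ^ 2 - (conjP f j : ℤ) ^ 2)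
        = ((a : ℤ) - 1) * ((r : ℤ) ^ 2 - ((r : ℤ) - 1) ^ 2) := by
      rw [Finset.sum_congr rfl (g := fun _ => ((r : ℤ) ^ 2 - ((r : ℤ) - 1) ^ 2)) ?_]
      · rw [Finset.sum_const, Nat.card_Icc]
        have : ((c + a + 1 - (c + 2) : ℕ) : ℤ) = (a : ℤ) - 1 := by omega
        rw [nsmul_eq_mul, this]
      · intro j hj
        simp only [Finset.mem_Icc] at hj
        rw [hcg2 j hj.1 hj.2, hcf j (by omega) hj.2]
        have : ((r - 1 : ℕ) : ℤ) = (r : ℤ) - 1 := by omega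
        rw [this]
    rw [h1, h2]
  -- compute the weight-sum difference explicitly
  have hsplitW : Finset.Icc r (r + m) = insert r (Finset.Icc (r + 1) (r + m)) := by
    ext i
    simp only [Finset.mem_insert, Finset.mem_Icc]
    omega
  set S : ℤ := ∑ i ∈ Finset.Icc (r + 1) (r + m), (i : ℤ) with hSdef
  have hWval : ∑ i ∈ Finset.Icc r (r + m), ((i : ℤ) * (g i : ℤ) - (i : ℤ) * (f i : ℤ))
      = (r : ℤ) * a + S := by
    rw [hsplitW, Finset.sum_insert (by simp)]
    have h1 : (r : ℤ) * (g r : ℤ) - (r : ℤ) * (f r : ℤ) = (r : ℤ) * a := by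
      rw [hgr]
      push_cast
      ring
    have h2 : ∑ i ∈ Finset.Icc (r + 1) (r + m), ((i : ℤ) * (g i : ℤ) - (i : ℤ) * (f i : ℤ))
        = S := by
      rw [hSdef]
      apply Finset.sum_congr rfl
      intro i hi
      simp only [Finset.mem_Icc] at hi
      rw [hgmid i (by omega) hi.2, hflat i (by omega) (by omega)]
      push_cast
      ring
    rw [h1, h2]
  -- Gauss sum
  have hS2 : 2 * S = (2 * (r : ℤ) + m + 1) * m := by
    rw [hSdef]
    have : Finset.Icc (r + 1) (r + m) = Finset.Ico (r + 1) (r + m + 1) := by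
      ext i; simp [Finset.mem_Icc, Finset.mem_Ico]
    rw [this, Finset.sum_Ico_eq_sum_range]
    have hcard : r + m + 1 - (r + 1) = m := by omega
    rw [hcard]
    induction m with
    | zero => simp
    | succ n ih =>
      rw [Finset.sum_range_succ, mul_add, ih]
      push_cast
      ring
  -- put it together
  have hkey : dP g - dP f
      = ((((r : ℤ) + m) ^ 2 - ((r : ℤ) - 1) ^ 2)
          + ((a : ℤ) - 1) * ((r : ℤ) ^ 2 - ((r : ℤ) - 1) ^ 2))
        - ((r : ℤ) * a + S) := by
    rw [dP, dP]
    have : (∑ᶠ j : ℕ, (conjP g j : ℤ) ^ 2) - (∑ᶠ i : ℕ, (i : ℤ) * (g i : ℤ))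
        - ((∑ᶠ j : ℕ, (conjP f j : ℤ) ^ 2) - (∑ᶠ i : ℕ, (i : ℤ) * (f i : ℤ)))
        = ((∑ᶠ j : ℕ, (conjP g j : ℤ) ^ 2) - (∑ᶠ j : ℕ, (conjP f j : ℤ) ^ 2))
          - ((∑ᶠ i : ℕ, (i : ℤ) * (g i : ℤ)) - (∑ᶠ i : ℕ, (i : ℤ) * (f i : ℤ))) := by
      ring
    rw [this, hCdiff, hWdiff, hCval, hWval]
  -- halves
  obtain ⟨k, hk⟩ : ∃ k : ℤ, (e : ℤ) * ((e : ℤ) - 1) = 2 * k := by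
    have := Int.even_mul_succ_self ((e : ℤ) - 1)
    obtain ⟨k, hk⟩ := this
    exact ⟨k, by linarith⟩
  obtain ⟨l, hl⟩ : ∃ l : ℤ, (a : ℤ) * ((a : ℤ) - 1) = 2 * l := by
    have := Int.even_mul_succ_self ((a : ℤ) - 1)
    obtain ⟨l, hl⟩ := this
    exact ⟨l, by linarith⟩
  have hdive : (e : ℤ) * ((e : ℤ) - 1) / 2 = k := by
    rw [hk]; exact Int.mul_ediv_cancel_left k two_ne_zero
  have hdiva : (a : ℤ) * ((a : ℤ) - 1) / 2 = l := by
    rw [hl]; exact Int.mul_ediv_cancel_left l two_ne_zero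
  rw [hkey, hdive, hdiva]
  have hem : (e : ℤ) = (a : ℤ) + (m : ℤ) := by omega
  rw [hem] at hk ⊢
  have h2 : 2 * (((((r : ℤ) + m) ^ 2 - ((r : ℤ) - 1) ^ 2)
          + ((a : ℤ) - 1) * ((r : ℤ) ^ 2 - ((r : ℤ) - 1) ^ 2))
        - ((r : ℤ) * a + S))
      = 2 * (((r : ℤ) - (a : ℤ)) * ((a : ℤ) + (m : ℤ)) + k + l) := by
    linear_combination -hS2 + hk + hl
  linarith
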